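/- arXiv:0806.2676 — 3 statements merged into one kernel-verified Lean document; each statement's English description precedes it below -/
import Mathlib

section
/- Let f and g be nonzero rational functions in ℂ(z). Then the product over all points p of the projective line ℙ¹(ℂ) (i.e., over all a ∈ ℂ together with the point ∞) of the tame symbols T_p{f,g} equals 1. (Only finitely many factors differ from 1, namely those at points where f or g has a zero or pole.) -/
open Polynomial

/-- The order of vanishing of a nonzero rational function `f ∈ ℂ(z)` at a point `a ∈ ℂ`:
the multiplicity of `a` as a root of the numerator minus its multiplicity as a root of
the denominator. -/
noncomputable def ordAt (f : RatFunc ℂ) (a : ℂ) : ℤ :=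
  (Polynomial.rootMultiplicity a f.num : ℤ) - (Polynomial.rootMultiplicity a f.denom : ℤ)

/-- The order of vanishing of a rational function at infinity:
`deg(denominator) − deg(numerator)`. -/
noncomputable def ordInf (f : RatFunc ℂ) : ℤ :=
  (f.denom.natDegree : ℤ) - (f.num.natDegree : ℤ)

/-- Evaluation of a rational function at a point of `ℂ`. -/
noncomputable def evalAt (f : RatFunc ℂ) (a : ℂ) : ℂ :=
  RatFunc.eval (RingHom.id ℂ) a f

-- representation lemma
lemma ordAt_rep {f : RatFunc ℂ} {p q : ℂ[X]} (hp : p ≠ 0) (hq : q ≠ 0)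
    (h : f = algebraMap ℂ[X] (RatFunc ℂ) p / algebraMap ℂ[X] (RatFunc ℂ) q) (a : ℂ) :
    ordAt f a = (rootMultiplicity a p : ℤ) - (rootMultiplicity a q : ℤ) := by
  have hf : f ≠ 0 := by
    rw [h]
    exact div_ne_zero (RatFunc.algebraMap_ne_zero hp) (RatFunc.algebraMap_ne_zero hq)
  have key : f.num * q = p * f.denom := by
    apply RatFunc.algebraMap_injective ℂ
    have h1 : algebraMap ℂ[X] (RatFunc ℂ) f.num / algebraMap ℂ[X] (RatFunc ℂ) f.denom
        = algebraMap ℂ[X] (RatFunc ℂ) p / algebraMap ℂ[X] (RatFunc ℂ) q := by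
      rw [RatFunc.num_div_denom, h]
    rw [div_eq_div_iff (RatFunc.algebraMap_ne_zero (RatFunc.denom_ne_zero f))
      (RatFunc.algebraMap_ne_zero hq)] at h1
    simpa only [map_mul] using h1
  have hnum : f.num ≠ 0 := RatFunc.num_ne_zero hf
  have hdenom : f.denom ≠ 0 := RatFunc.denom_ne_zero f
  have h2 := congrArg (fun r => (rootMultiplicity a r : ℤ)) key
  simp only [Polynomial.rootMultiplicity_mul (mul_ne_zero hnum hq),
    Polynomial.rootMultiplicity_mul (mul_ne_zero hp hdenom)] at h2
  push_cast at h2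
  unfold ordAt
  omega

lemma ordInf_rep {f : RatFunc ℂ} {p q : ℂ[X]} (hp : p ≠ 0) (hq : q ≠ 0)
    (h : f = algebraMap ℂ[X] (RatFunc ℂ) p / algebraMap ℂ[X] (RatFunc ℂ) q) :
    ordInf f = (q.natDegree : ℤ) - (p.natDegree : ℤ) := by
  have hf : f ≠ 0 := by
    rw [h]
    exact div_ne_zero (RatFunc.algebraMap_ne_zero hp) (RatFunc.algebraMap_ne_zero hq)
  have key : f.num * q = p * f.denom := by
    apply RatFunc.algebraMap_injective ℂ
    have h1 : algebraMap ℂ[X] (RatFunc ℂ) f.num / algebraMap ℂ[X] (RatFunc ℂ) f.denom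
        = algebraMap ℂ[X] (RatFunc ℂ) p / algebraMap ℂ[X] (RatFunc ℂ) q := by
      rw [RatFunc.num_div_denom, h]
    rw [div_eq_div_iff (RatFunc.algebraMap_ne_zero (RatFunc.denom_ne_zero f))
      (RatFunc.algebraMap_ne_zero hq)] at h1
    simpa only [map_mul] using h1
  have hnum : f.num ≠ 0 := RatFunc.num_ne_zero hf
  have hdenom : f.denom ≠ 0 := RatFunc.denom_ne_zero f
  have h2 := congrArg (fun r => (Polynomial.natDegree r : ℤ)) key
  simp only [Polynomial.natDegree_mul hnum hq, Polynomial.natDegree_mul hp hdenom] at h2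
  push_cast at h2
  unfold ordInf
  omega

lemma ordAt_mul {f g : RatFunc ℂ} (hf : f ≠ 0) (hg : g ≠ 0) (a : ℂ) :
    ordAt (f * g) a = ordAt f a + ordAt g a := by
  have hrep : f * g = algebraMap ℂ[X] (RatFunc ℂ) (f.num * g.num)
      / algebraMap ℂ[X] (RatFunc ℂ) (f.denom * g.denom) := by
    rw [map_mul, map_mul, ← div_mul_div_comm, RatFunc.num_div_denom, RatFunc.num_div_denom]
  rw [ordAt_rep (mul_ne_zero (RatFunc.num_ne_zero hf) (RatFunc.num_ne_zero hg))
    (mul_ne_zero (RatFunc.denom_ne_zero f) (RatFunc.denom_ne_zero g)) hrep a,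
    Polynomial.rootMultiplicity_mul (mul_ne_zero (RatFunc.num_ne_zero hf) (RatFunc.num_ne_zero hg)),
    Polynomial.rootMultiplicity_mul (mul_ne_zero (RatFunc.denom_ne_zero f) (RatFunc.denom_ne_zero g))]
  unfold ordAt
  push_cast
  ring

lemma ordInf_mul {f g : RatFunc ℂ} (hf : f ≠ 0) (hg : g ≠ 0) :
    ordInf (f * g) = ordInf f + ordInf g := by
  have hrep : f * g = algebraMap ℂ[X] (RatFunc ℂ) (f.num * g.num)
      / algebraMap ℂ[X] (RatFunc ℂ) (f.denom * g.denom) := by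
    rw [map_mul, map_mul, ← div_mul_div_comm, RatFunc.num_div_denom, RatFunc.num_div_denom]
  rw [ordInf_rep (mul_ne_zero (RatFunc.num_ne_zero hf) (RatFunc.num_ne_zero hg))
    (mul_ne_zero (RatFunc.denom_ne_zero f) (RatFunc.denom_ne_zero g)) hrep,
    Polynomial.natDegree_mul (RatFunc.num_ne_zero hf) (RatFunc.num_ne_zero hg),
    Polynomial.natDegree_mul (RatFunc.denom_ne_zero f) (RatFunc.denom_ne_zero g)]
  unfold ordInf
  push_cast
  ring

lemma ordAt_one (a : ℂ) : ordAt 1 a = 0 := by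
  have : (1 : RatFunc ℂ) = algebraMap ℂ[X] (RatFunc ℂ) 1 / algebraMap ℂ[X] (RatFunc ℂ) 1 := by
    simp
  rw [ordAt_rep one_ne_zero one_ne_zero this a]
  simp

lemma ordInf_one : ordInf (1 : RatFunc ℂ) = 0 := by
  have : (1 : RatFunc ℂ) = algebraMap ℂ[X] (RatFunc ℂ) 1 / algebraMap ℂ[X] (RatFunc ℂ) 1 := by
    simp
  rw [ordInf_rep one_ne_zero one_ne_zero this]
  simp

lemma ordAt_inv {f : RatFunc ℂ} (hf : f ≠ 0) (a : ℂ) : ordAt f⁻¹ a = -ordAt f a := by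
  have h := ordAt_mul (inv_ne_zero hf) hf a
  rw [inv_mul_cancel₀ hf, ordAt_one] at h
  omega

lemma ordInf_inv {f : RatFunc ℂ} (hf : f ≠ 0) : ordInf f⁻¹ = -ordInf f := by
  have h := ordInf_mul (inv_ne_zero hf) hf
  rw [inv_mul_cancel₀ hf, ordInf_one] at h
  omega

lemma ordAt_zpow {f : RatFunc ℂ} (hf : f ≠ 0) (n : ℤ) (a : ℂ) :
    ordAt (f ^ n) a = n * ordAt f a := by
  induction n using Int.induction_on with
  | zero => simpa using ordAt_one a
  | succ k ih =>
      rw [zpow_add_one₀ hf, ordAt_mul (zpow_ne_zero _ hf) hf, ih]; ring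
  | pred k ih =>
      rw [zpow_sub_one₀ hf, ordAt_mul (zpow_ne_zero _ hf) (inv_ne_zero hf), ih, ordAt_inv hf]; ring

lemma ordInf_zpow {f : RatFunc ℂ} (hf : f ≠ 0) (n : ℤ) :
    ordInf (f ^ n) = n * ordInf f := by
  induction n using Int.induction_on with
  | zero => simpa using ordInf_one
  | succ k ih =>
      rw [zpow_add_one₀ hf, ordInf_mul (zpow_ne_zero _ hf) hf, ih]; ring
  | pred k ih =>
      rw [zpow_sub_one₀ hf, ordInf_mul (zpow_ne_zero _ hf) (inv_ne_zero hf), ih, ordInf_inv hf]; ring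

lemma ordAt_div {f g : RatFunc ℂ} (hf : f ≠ 0) (hg : g ≠ 0) (a : ℂ) :
    ordAt (f / g) a = ordAt f a - ordAt g a := by
  rw [div_eq_mul_inv, ordAt_mul hf (inv_ne_zero hg), ordAt_inv hg]; ring

lemma ordInf_div {f g : RatFunc ℂ} (hf : f ≠ 0) (hg : g ≠ 0) :
    ordInf (f / g) = ordInf f - ordInf g := by
  rw [div_eq_mul_inv, ordInf_mul hf (inv_ne_zero hg), ordInf_inv hg]; ring

lemma not_root_both {f : RatFunc ℂ} (hf : f ≠ 0) (a : ℂ) :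
    ¬(f.num.IsRoot a ∧ f.denom.IsRoot a) := by
  rintro ⟨h1, h2⟩
  exact Polynomial.not_isUnit_X_sub_C a
    ((RatFunc.isCoprime_num_denom f).isUnit_of_dvd'
      (Polynomial.dvd_iff_isRoot.mpr h1) (Polynomial.dvd_iff_isRoot.mpr h2))

lemma eval_ne_of_ordAt_zero {f : RatFunc ℂ} (hf : f ≠ 0) {a : ℂ} (h : ordAt f a = 0) :
    f.num.eval a ≠ 0 ∧ f.denom.eval a ≠ 0 := by
  have hn := RatFunc.num_ne_zero hf
  have hd := RatFunc.denom_ne_zero f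
  by_cases hr : f.denom.IsRoot a
  · have h1 : ¬f.num.IsRoot a := fun hh => not_root_both hf a ⟨hh, hr⟩
    have h2 := Polynomial.rootMultiplicity_eq_zero h1
    have h3 := (Polynomial.rootMultiplicity_pos hd).mpr hr
    unfold ordAt at h
    omega
  · have h2 := Polynomial.rootMultiplicity_eq_zero hr
    unfold ordAt at h
    have h3 : rootMultiplicity a f.num = 0 := by omega
    have h4 : ¬f.num.IsRoot a := by
      intro hh
      have := (Polynomial.rootMultiplicity_pos hn).mpr hh
      omega
    exact ⟨h4, hr⟩

lemma denom_eval₂_ne {f : RatFunc ℂ} (hf : f ≠ 0) {a : ℂ} (h : ordAt f a = 0) :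
    Polynomial.eval₂ (RingHom.id ℂ) a f.denom ≠ 0 := by
  have e : Polynomial.eval₂ (RingHom.id ℂ) a f.denom = f.denom.eval a := rfl
  rw [e]
  exact (eval_ne_of_ordAt_zero hf h).2

lemma evalAt_eq {f : RatFunc ℂ} (a : ℂ) :
    evalAt f a = f.num.eval a / f.denom.eval a := by
  unfold evalAt RatFunc.eval
  rfl

lemma evalAt_ne_zero_of_ordAt_zero {f : RatFunc ℂ} (hf : f ≠ 0) {a : ℂ} (h : ordAt f a = 0) :
    evalAt f a ≠ 0 := by
  rw [evalAt_eq]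
  obtain ⟨h1, h2⟩ := eval_ne_of_ordAt_zero hf h
  exact div_ne_zero h1 h2

lemma evalAt_mul_of_ordAt_zero {f g : RatFunc ℂ} (hf : f ≠ 0) (hg : g ≠ 0) {a : ℂ}
    (h1 : ordAt f a = 0) (h2 : ordAt g a = 0) :
    evalAt (f * g) a = evalAt f a * evalAt g a := by
  unfold evalAt
  exact RatFunc.eval_mul (hx := denom_eval₂_ne hf h1) (hy := denom_eval₂_ne hg h2)

lemma evalAt_one (a : ℂ) : evalAt 1 a = 1 := RatFunc.eval_one _ _

lemma evalAt_inv_of_ordAt_zero {f : RatFunc ℂ} (hf : f ≠ 0) {a : ℂ} (h : ordAt f a = 0) :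
    evalAt f⁻¹ a = (evalAt f a)⁻¹ := by
  have h' : ordAt f⁻¹ a = 0 := by rw [ordAt_inv hf a, h]; ring
  have := evalAt_mul_of_ordAt_zero hf (inv_ne_zero hf) h h'
  rw [mul_inv_cancel₀ hf, evalAt_one] at this
  exact eq_inv_of_mul_eq_one_right this.symm

/-- The substitution `z ↦ 1/z` applied to a rational function. -/
noncomputable def invSubst (f : RatFunc ℂ) : RatFunc ℂ :=
  RatFunc.eval (algebraMap ℂ (RatFunc ℂ)) (RatFunc.X)⁻¹ f

lemma eval₂_X_eq_algebraMap (q : ℂ[X]) :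
    Polynomial.eval₂ (algebraMap ℂ (RatFunc ℂ)) RatFunc.X q = algebraMap ℂ[X] (RatFunc ℂ) q := by
  induction q using Polynomial.induction_on with
  | C a =>
      rw [Polynomial.eval₂_C, IsScalarTower.algebraMap_apply ℂ ℂ[X] (RatFunc ℂ)]
      simp
  | add p q hp hq => rw [Polynomial.eval₂_add, hp, hq, map_add]
  | monomial n a ih =>
      rw [Polynomial.eval₂_mul, Polynomial.eval₂_C, Polynomial.eval₂_X_pow, map_mul, map_pow,
        RatFunc.algebraMap_X, IsScalarTower.algebraMap_apply ℂ ℂ[X] (RatFunc ℂ),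
        Polynomial.algebraMap_eq]

noncomputable instance : Invertible ((RatFunc.X : RatFunc ℂ)⁻¹) :=
  invertibleOfNonzero (inv_ne_zero RatFunc.X_ne_zero)

lemma key_reverse (p : ℂ[X]) :
    Polynomial.eval₂ (algebraMap ℂ (RatFunc ℂ)) (RatFunc.X)⁻¹ p
      = algebraMap ℂ[X] (RatFunc ℂ) p.reverse * (RatFunc.X)⁻¹ ^ p.natDegree := by
  have h := Polynomial.eval₂_reverse_mul_pow (algebraMap ℂ (RatFunc ℂ))
    ((RatFunc.X : RatFunc ℂ)⁻¹) p
  have hinv : (⅟((RatFunc.X : RatFunc ℂ)⁻¹)) = RatFunc.X := by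
    rw [invOf_eq_inv, inv_inv]
  rw [hinv, eval₂_X_eq_algebraMap] at h
  exact h.symm

lemma aevalInv_injective :
    Function.Injective (Polynomial.eval₂RingHom (algebraMap ℂ (RatFunc ℂ)) (RatFunc.X)⁻¹) := by
  rw [injective_iff_map_eq_zero]
  intro p hp
  rw [Polynomial.coe_eval₂RingHom] at hp
  have h := key_reverse p
  rw [hp] at h
  have h2 : algebraMap ℂ[X] (RatFunc ℂ) p.reverse = 0 := by
    rcases mul_eq_zero.mp h.symm with h3 | h3
    · exact h3
    · exact absurd h3 (pow_ne_zero _ (inv_ne_zero RatFunc.X_ne_zero))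
  have h3 : p.reverse = 0 := by
    by_contra hne
    exact RatFunc.algebraMap_ne_zero hne h2
  exact Polynomial.reverse_eq_zero.mp h3

/-- The field endomorphism of `ℂ(z)` given by `z ↦ 1/z`. -/
noncomputable def J : RatFunc ℂ →+* RatFunc ℂ :=
  IsFractionRing.lift aevalInv_injective

lemma J_algebraMap (p : ℂ[X]) :
    J (algebraMap ℂ[X] (RatFunc ℂ) p)
      = Polynomial.eval₂ (algebraMap ℂ (RatFunc ℂ)) (RatFunc.X)⁻¹ p := by
  unfold J
  rw [IsFractionRing.lift_algebraMap]
  rfl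

lemma invSubst_eq_J (f : RatFunc ℂ) : invSubst f = J f := by
  have h : invSubst f = Polynomial.eval₂ (algebraMap ℂ (RatFunc ℂ)) (RatFunc.X)⁻¹ f.num
      / Polynomial.eval₂ (algebraMap ℂ (RatFunc ℂ)) (RatFunc.X)⁻¹ f.denom := rfl
  rw [h, ← J_algebraMap, ← J_algebraMap, ← map_div₀, RatFunc.num_div_denom]

lemma J_ne_zero {f : RatFunc ℂ} (hf : f ≠ 0) : J f ≠ 0 := by
  intro h
  apply hf
  have : Function.Injective J := J.injective
  rw [← map_zero J] at h
  exact this h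

lemma reverse_ne_zero {p : ℂ[X]} (hp : p ≠ 0) : p.reverse ≠ 0 :=
  fun h => hp (Polynomial.reverse_eq_zero.mp h)

lemma J_rep {f : RatFunc ℂ} (hf : f ≠ 0) :
    J f = algebraMap ℂ[X] (RatFunc ℂ) (f.num.reverse * X ^ f.denom.natDegree)
      / algebraMap ℂ[X] (RatFunc ℂ) (f.denom.reverse * X ^ f.num.natDegree) := by
  conv_lhs => rw [← RatFunc.num_div_denom f]
  rw [map_div₀, J_algebraMap, J_algebraMap, key_reverse, key_reverse, map_mul, map_mul,
    map_pow, map_pow, RatFunc.algebraMap_X]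
  have hX : (RatFunc.X : RatFunc ℂ) ≠ 0 := RatFunc.X_ne_zero
  have hA : algebraMap ℂ[X] (RatFunc ℂ) f.num.reverse ≠ 0 :=
    RatFunc.algebraMap_ne_zero (reverse_ne_zero (RatFunc.num_ne_zero hf))
  have hB : algebraMap ℂ[X] (RatFunc ℂ) f.denom.reverse ≠ 0 :=
    RatFunc.algebraMap_ne_zero (reverse_ne_zero (RatFunc.denom_ne_zero f))
  field_simp
  ring
  rw [← mul_pow, ← mul_pow, mul_inv_cancel₀ hX, one_pow, one_pow]

lemma rootMultiplicity_zero_X_pow (k : ℕ) :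
    rootMultiplicity (0 : ℂ) ((X : ℂ[X]) ^ k) = k := by
  have h := Polynomial.rootMultiplicity_mul_X_sub_C_pow (a := (0:ℂ)) (n := k)
    (p := (1 : ℂ[X])) one_ne_zero
  rw [Polynomial.C_0, sub_zero, one_mul] at h
  rw [h, Polynomial.rootMultiplicity_eq_zero (by simp : ¬(1:ℂ[X]).IsRoot 0), zero_add]

lemma rootMultiplicity_zero_reverse {p : ℂ[X]} (hp : p ≠ 0) :
    rootMultiplicity (0 : ℂ) p.reverse = 0 := by
  apply Polynomial.rootMultiplicity_eq_zero
  unfold Polynomial.IsRoot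
  rw [← Polynomial.coeff_zero_eq_eval_zero, Polynomial.coeff_zero_reverse]
  exact Polynomial.leadingCoeff_ne_zero.mpr hp

lemma ordAt_J_zero {f : RatFunc ℂ} (hf : f ≠ 0) : ordAt (J f) 0 = ordInf f := by
  have hn := RatFunc.num_ne_zero hf
  have hd := RatFunc.denom_ne_zero f
  have hp : f.num.reverse * X ^ f.denom.natDegree ≠ 0 :=
    mul_ne_zero (reverse_ne_zero hn) (pow_ne_zero _ Polynomial.X_ne_zero)
  have hq : f.denom.reverse * X ^ f.num.natDegree ≠ 0 :=
    mul_ne_zero (reverse_ne_zero hd) (pow_ne_zero _ Polynomial.X_ne_zero)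
  rw [ordAt_rep hp hq (J_rep hf) 0,
    Polynomial.rootMultiplicity_mul hp, Polynomial.rootMultiplicity_mul hq,
    rootMultiplicity_zero_X_pow, rootMultiplicity_zero_X_pow,
    rootMultiplicity_zero_reverse hn, rootMultiplicity_zero_reverse hd]
  unfold ordInf
  push_cast
  ring

/-- The tame symbol `T_a{f,g}` at a finite point `a ∈ ℂ`:
`(−1)^{ord_a(f)·ord_a(g)} · (f^{ord_a(g)}/g^{ord_a(f)})(a)`. -/
noncomputable def tameSymbol (f g : RatFunc ℂ) (a : ℂ) : ℂ :=
  (-1 : ℂ) ^ (ordAt f a * ordAt g a) * evalAt (f ^ ordAt g a / g ^ ordAt f a) a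

/-- The tame symbol `T_∞{f,g}` at the point at infinity, obtained by applying the
substitution `z ↦ 1/z` to `f^{ord_∞(g)}/g^{ord_∞(f)}` and evaluating at `0`. -/
noncomputable def tameSymbolInf (f g : RatFunc ℂ) : ℂ :=
  (-1 : ℂ) ^ (ordInf f * ordInf g) * evalAt (invSubst (f ^ ordInf g / g ^ ordInf f)) 0

lemma neg_one_ne_zero' : (-1 : ℂ) ≠ 0 := by norm_num

lemma neg_one_zpow_self_inv (k : ℤ) : ((-1 : ℂ) ^ k)⁻¹ = (-1 : ℂ) ^ k := by
  have h : (-1 : ℂ) ^ k * (-1 : ℂ) ^ k = 1 := by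
    rw [← zpow_add₀ neg_one_ne_zero']
    have : k + k = 2 * k := by ring
    rw [this, zpow_mul]
    norm_num
  exact (eq_inv_of_mul_eq_one_right h).symm

lemma tameSymbolInf_eq_J {f g : RatFunc ℂ} :
    tameSymbolInf f g
      = (-1 : ℂ) ^ (ordInf f * ordInf g) * evalAt ((J f) ^ ordInf g / (J g) ^ ordInf f) 0 := by
  unfold tameSymbolInf
  rw [invSubst_eq_J, map_div₀, map_zpow₀, map_zpow₀]

lemma ordAt_symbol_arg {f g : RatFunc ℂ} (hf : f ≠ 0) (hg : g ≠ 0) (m n : ℤ) (a : ℂ)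
    (hm : ordAt f a = m) (hn : ordAt g a = n) :
    ordAt (f ^ n / g ^ m) a = 0 := by
  rw [ordAt_div (zpow_ne_zero _ hf) (zpow_ne_zero _ hg), ordAt_zpow hf, ordAt_zpow hg, hm, hn]
  ring

lemma tameSymbol_mul_left {f₁ f₂ g : RatFunc ℂ} (hf₁ : f₁ ≠ 0) (hf₂ : f₂ ≠ 0) (hg : g ≠ 0)
    (a : ℂ) : tameSymbol (f₁ * f₂) g a = tameSymbol f₁ g a * tameSymbol f₂ g a := by
  unfold tameSymbol
  rw [ordAt_mul hf₁ hf₂]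
  have hsplit : (f₁ * f₂) ^ ordAt g a / g ^ (ordAt f₁ a + ordAt f₂ a)
      = (f₁ ^ ordAt g a / g ^ ordAt f₁ a) * (f₂ ^ ordAt g a / g ^ ordAt f₂ a) := by
    rw [mul_zpow, zpow_add₀ hg, div_mul_div_comm]
  rw [hsplit, evalAt_mul_of_ordAt_zero
    (div_ne_zero (zpow_ne_zero _ hf₁) (zpow_ne_zero _ hg))
    (div_ne_zero (zpow_ne_zero _ hf₂) (zpow_ne_zero _ hg))
    (ordAt_symbol_arg hf₁ hg _ _ a rfl rfl)
    (ordAt_symbol_arg hf₂ hg _ _ a rfl rfl)]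
  rw [add_mul, zpow_add₀ neg_one_ne_zero']
  ring

lemma tameSymbol_one_left {g : RatFunc ℂ} (a : ℂ) : tameSymbol 1 g a = 1 := by
  unfold tameSymbol
  rw [ordAt_one, one_zpow, zpow_zero, div_one, evalAt_one, zero_mul, zpow_zero, one_mul]

lemma tameSymbol_ne_zero {f g : RatFunc ℂ} (hf : f ≠ 0) (hg : g ≠ 0) (a : ℂ) :
    tameSymbol f g a ≠ 0 := by
  unfold tameSymbol
  apply mul_ne_zero (zpow_ne_zero _ neg_one_ne_zero')
  exact evalAt_ne_zero_of_ordAt_zero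
    (div_ne_zero (zpow_ne_zero _ hf) (zpow_ne_zero _ hg))
    (ordAt_symbol_arg hf hg _ _ a rfl rfl)

lemma tameSymbol_inv_left {f g : RatFunc ℂ} (hf : f ≠ 0) (hg : g ≠ 0) (a : ℂ) :
    tameSymbol f⁻¹ g a = (tameSymbol f g a)⁻¹ := by
  have h := tameSymbol_mul_left (inv_ne_zero hf) hf hg a
  rw [inv_mul_cancel₀ hf, tameSymbol_one_left] at h
  exact eq_inv_of_mul_eq_one_left h.symm

lemma tameSymbol_swap {f g : RatFunc ℂ} (hf : f ≠ 0) (hg : g ≠ 0) (a : ℂ) :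
    tameSymbol g f a = (tameSymbol f g a)⁻¹ := by
  unfold tameSymbol
  have harg : g ^ ordAt f a / f ^ ordAt g a = (f ^ ordAt g a / g ^ ordAt f a)⁻¹ := by
    rw [inv_div]
  rw [harg, evalAt_inv_of_ordAt_zero
    (div_ne_zero (zpow_ne_zero _ hf) (zpow_ne_zero _ hg))
    (ordAt_symbol_arg hf hg _ _ a rfl rfl), mul_inv, neg_one_zpow_self_inv, mul_comm (ordAt g a)]

lemma tameSymbolInf_mul_left {f₁ f₂ g : RatFunc ℂ} (hf₁ : f₁ ≠ 0) (hf₂ : f₂ ≠ 0) (hg : g ≠ 0) :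
    tameSymbolInf (f₁ * f₂) g = tameSymbolInf f₁ g * tameSymbolInf f₂ g := by
  rw [tameSymbolInf_eq_J, tameSymbolInf_eq_J, tameSymbolInf_eq_J]
  rw [ordInf_mul hf₁ hf₂, map_mul]
  have hJ₁ := J_ne_zero hf₁
  have hJ₂ := J_ne_zero hf₂
  have hJg := J_ne_zero hg
  have hsplit : (J f₁ * J f₂) ^ ordInf g / (J g) ^ (ordInf f₁ + ordInf f₂)
      = (J f₁ ^ ordInf g / J g ^ ordInf f₁) * (J f₂ ^ ordInf g / J g ^ ordInf f₂) := by
    rw [mul_zpow, zpow_add₀ hJg, div_mul_div_comm]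
  rw [hsplit, evalAt_mul_of_ordAt_zero
    (div_ne_zero (zpow_ne_zero _ hJ₁) (zpow_ne_zero _ hJg))
    (div_ne_zero (zpow_ne_zero _ hJ₂) (zpow_ne_zero _ hJg))
    (ordAt_symbol_arg hJ₁ hJg _ _ 0 (ordAt_J_zero hf₁) (ordAt_J_zero hg))
    (ordAt_symbol_arg hJ₂ hJg _ _ 0 (ordAt_J_zero hf₂) (ordAt_J_zero hg))]
  rw [add_mul, zpow_add₀ neg_one_ne_zero']
  ring

lemma tameSymbolInf_one_left {g : RatFunc ℂ} : tameSymbolInf 1 g = 1 := by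
  unfold tameSymbolInf
  rw [ordInf_one, one_zpow, zpow_zero, div_one]
  have : invSubst 1 = 1 := by rw [invSubst_eq_J, map_one]
  rw [this, evalAt_one, zero_mul, zpow_zero, one_mul]

lemma tameSymbolInf_ne_zero {f g : RatFunc ℂ} (hf : f ≠ 0) (hg : g ≠ 0) :
    tameSymbolInf f g ≠ 0 := by
  rw [tameSymbolInf_eq_J]
  apply mul_ne_zero (zpow_ne_zero _ neg_one_ne_zero')
  exact evalAt_ne_zero_of_ordAt_zero
    (div_ne_zero (zpow_ne_zero _ (J_ne_zero hf)) (zpow_ne_zero _ (J_ne_zero hg)))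
    (ordAt_symbol_arg (J_ne_zero hf) (J_ne_zero hg) _ _ 0 (ordAt_J_zero hf) (ordAt_J_zero hg))

lemma tameSymbolInf_inv_left {f g : RatFunc ℂ} (hf : f ≠ 0) (hg : g ≠ 0) :
    tameSymbolInf f⁻¹ g = (tameSymbolInf f g)⁻¹ := by
  have h := tameSymbolInf_mul_left (inv_ne_zero hf) hf hg
  rw [inv_mul_cancel₀ hf, tameSymbolInf_one_left] at h
  exact eq_inv_of_mul_eq_one_left h.symm

lemma tameSymbolInf_swap {f g : RatFunc ℂ} (hf : f ≠ 0) (hg : g ≠ 0) :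
    tameSymbolInf g f = (tameSymbolInf f g)⁻¹ := by
  rw [tameSymbolInf_eq_J, tameSymbolInf_eq_J]
  have harg : (J g) ^ ordInf f / (J f) ^ ordInf g = ((J f) ^ ordInf g / (J g) ^ ordInf f)⁻¹ := by
    rw [inv_div]
  rw [harg, evalAt_inv_of_ordAt_zero
    (div_ne_zero (zpow_ne_zero _ (J_ne_zero hf)) (zpow_ne_zero _ (J_ne_zero hg)))
    (ordAt_symbol_arg (J_ne_zero hf) (J_ne_zero hg) _ _ 0 (ordAt_J_zero hf) (ordAt_J_zero hg)),
    mul_inv, neg_one_zpow_self_inv, mul_comm (ordInf g)]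

/-- The Weil reciprocity statement for a pair of rational functions. -/
def WR (f g : RatFunc ℂ) : Prop :=
  {a : ℂ | tameSymbol f g a ≠ 1}.Finite ∧
    (∏ᶠ a : ℂ, tameSymbol f g a) * tameSymbolInf f g = 1

lemma mulSupport_eq (f g : RatFunc ℂ) :
    Function.mulSupport (fun a => tameSymbol f g a) = {a : ℂ | tameSymbol f g a ≠ 1} := rfl

lemma WR_mul_left {f₁ f₂ g : RatFunc ℂ} (hf₁ : f₁ ≠ 0) (hf₂ : f₂ ≠ 0) (hg : g ≠ 0)
    (h1 : WR f₁ g) (h2 : WR f₂ g) : WR (f₁ * f₂) g := by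
  obtain ⟨hfin1, hprod1⟩ := h1
  obtain ⟨hfin2, hprod2⟩ := h2
  have hsub : {a : ℂ | tameSymbol (f₁ * f₂) g a ≠ 1}
      ⊆ {a : ℂ | tameSymbol f₁ g a ≠ 1} ∪ {a : ℂ | tameSymbol f₂ g a ≠ 1} := by
    intro a ha
    simp only [Set.mem_setOf_eq, Set.mem_union]
    by_contra hcon
    push_neg at hcon
    apply ha
    rw [tameSymbol_mul_left hf₁ hf₂ hg, hcon.1, hcon.2, one_mul]
  constructor
  · exact ((hfin1.union hfin2).subset hsub)
  · have he : (∏ᶠ a : ℂ, tameSymbol (f₁ * f₂) g a)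
        = ∏ᶠ a : ℂ, tameSymbol f₁ g a * tameSymbol f₂ g a :=
      finprod_congr (fun a => tameSymbol_mul_left hf₁ hf₂ hg a)
    rw [he, finprod_mul_distrib (by unfold Function.HasFiniteMulSupport; exact hfin1)
        (by unfold Function.HasFiniteMulSupport; exact hfin2),
      tameSymbolInf_mul_left hf₁ hf₂ hg]
    calc (∏ᶠ a : ℂ, tameSymbol f₁ g a) * (∏ᶠ a : ℂ, tameSymbol f₂ g a)
        * (tameSymbolInf f₁ g * tameSymbolInf f₂ g)
        = ((∏ᶠ a : ℂ, tameSymbol f₁ g a) * tameSymbolInf f₁ g)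
          * ((∏ᶠ a : ℂ, tameSymbol f₂ g a) * tameSymbolInf f₂ g) := by ring
      _ = 1 := by rw [hprod1, hprod2, one_mul]

lemma WR_inv_left {f g : RatFunc ℂ} (hf : f ≠ 0) (hg : g ≠ 0) (h : WR f g) : WR f⁻¹ g := by
  obtain ⟨hfin, hprod⟩ := h
  have hsub : {a : ℂ | tameSymbol f⁻¹ g a ≠ 1} ⊆ {a : ℂ | tameSymbol f g a ≠ 1} := by
    intro a ha
    simp only [Set.mem_setOf_eq] at ha ⊢
    intro hcon
    apply ha
    rw [tameSymbol_inv_left hf hg, hcon, inv_one]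
  constructor
  · exact hfin.subset hsub
  · have he : (∏ᶠ a : ℂ, tameSymbol f⁻¹ g a) = ∏ᶠ a : ℂ, (tameSymbol f g a)⁻¹ :=
      finprod_congr (fun a => tameSymbol_inv_left hf hg a)
    rw [he, finprod_inv_distrib, tameSymbolInf_inv_left hf hg, ← mul_inv, hprod, inv_one]

lemma WR_swap {f g : RatFunc ℂ} (hf : f ≠ 0) (hg : g ≠ 0) (h : WR f g) : WR g f := by
  obtain ⟨hfin, hprod⟩ := h
  have hsub : {a : ℂ | tameSymbol g f a ≠ 1} ⊆ {a : ℂ | tameSymbol f g a ≠ 1} := by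
    intro a ha
    simp only [Set.mem_setOf_eq] at ha ⊢
    intro hcon
    apply ha
    rw [tameSymbol_swap hf hg, hcon, inv_one]
  constructor
  · exact hfin.subset hsub
  · have he : (∏ᶠ a : ℂ, tameSymbol g f a) = ∏ᶠ a : ℂ, (tameSymbol f g a)⁻¹ :=
      finprod_congr (fun a => tameSymbol_swap hf hg a)
    rw [he, finprod_inv_distrib, tameSymbolInf_swap hf hg, ← mul_inv, hprod, inv_one]

lemma evalAt_algebraMap (p : ℂ[X]) (a : ℂ) :
    evalAt (algebraMap ℂ[X] (RatFunc ℂ) p) a = p.eval a := by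
  unfold evalAt
  rw [RatFunc.eval_algebraMap]
  rfl

lemma evalAt_div_algebraMap {p q : ℂ[X]} (hq : q ≠ 0) {a : ℂ} (hqa : q.eval a ≠ 0) :
    evalAt (algebraMap ℂ[X] (RatFunc ℂ) p / algebraMap ℂ[X] (RatFunc ℂ) q) a
      = p.eval a / q.eval a := by
  by_cases hp : p = 0
  · simp [hp, evalAt_eq]
  set h := algebraMap ℂ[X] (RatFunc ℂ) p / algebraMap ℂ[X] (RatFunc ℂ) q with hh
  have hne : h ≠ 0 :=
    div_ne_zero (RatFunc.algebraMap_ne_zero hp) (RatFunc.algebraMap_ne_zero hq)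
  have key : h.num * q = p * h.denom := by
    apply RatFunc.algebraMap_injective ℂ
    have h1 : algebraMap ℂ[X] (RatFunc ℂ) h.num / algebraMap ℂ[X] (RatFunc ℂ) h.denom
        = algebraMap ℂ[X] (RatFunc ℂ) p / algebraMap ℂ[X] (RatFunc ℂ) q := by
      rw [RatFunc.num_div_denom]
    rw [div_eq_div_iff (RatFunc.algebraMap_ne_zero (RatFunc.denom_ne_zero h))
      (RatFunc.algebraMap_ne_zero hq)] at h1
    simpa only [map_mul] using h1
  have hdvd : h.denom ∣ q := (RatFunc.denom_dvd hq).mpr ⟨p, hh⟩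
  obtain ⟨r, hr⟩ := hdvd
  have hda : h.denom.eval a ≠ 0 := by
    intro h0
    apply hqa
    rw [hr, Polynomial.eval_mul, h0, zero_mul]
  have keval : h.num.eval a * q.eval a = p.eval a * h.denom.eval a := by
    have := congrArg (Polynomial.eval a) key
    simpa [Polynomial.eval_mul] using this
  rw [evalAt_eq, div_eq_div_iff hda hqa]
  linear_combination keval

noncomputable def lin (α : ℂ) : RatFunc ℂ := algebraMap ℂ[X] (RatFunc ℂ) (X - C α)
noncomputable def con (c : ℂ) : RatFunc ℂ := algebraMap ℂ[X] (RatFunc ℂ) (C c)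

lemma lin_poly_ne_zero (α : ℂ) : (X - C α : ℂ[X]) ≠ 0 := X_sub_C_ne_zero α

lemma lin_ne_zero (α : ℂ) : lin α ≠ 0 := RatFunc.algebraMap_ne_zero (lin_poly_ne_zero α)

lemma con_ne_zero {c : ℂ} (hc : c ≠ 0) : con c ≠ 0 :=
  RatFunc.algebraMap_ne_zero (fun h => hc (by simpa using congrArg (Polynomial.eval 0) h))

lemma ordAt_con {c : ℂ} (hc : c ≠ 0) (a : ℂ) : ordAt (con c) a = 0 := by
  have hrep : con c = algebraMap ℂ[X] (RatFunc ℂ) (C c) / algebraMap ℂ[X] (RatFunc ℂ) 1 := by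
    simp [con]
  rw [ordAt_rep (fun h => hc (by simpa using congrArg (Polynomial.eval 0) h)) one_ne_zero hrep a]
  rw [Polynomial.rootMultiplicity_eq_zero (by simp [Polynomial.IsRoot, hc]),
    Polynomial.rootMultiplicity_eq_zero (by simp [Polynomial.IsRoot])]
  ring

lemma ordInf_con {c : ℂ} (hc : c ≠ 0) : ordInf (con c) = 0 := by
  have hrep : con c = algebraMap ℂ[X] (RatFunc ℂ) (C c) / algebraMap ℂ[X] (RatFunc ℂ) 1 := by
    simp [con]
  rw [ordInf_rep (fun h => hc (by simpa using congrArg (Polynomial.eval 0) h)) one_ne_zero hrep]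
  simp

lemma ordAt_lin (α a : ℂ) : ordAt (lin α) a = if a = α then 1 else 0 := by
  have hrep : lin α = algebraMap ℂ[X] (RatFunc ℂ) (X - C α) / algebraMap ℂ[X] (RatFunc ℂ) 1 := by
    simp [lin]
  rw [ordAt_rep (lin_poly_ne_zero α) one_ne_zero hrep a,
    Polynomial.rootMultiplicity_eq_zero (p := (1:ℂ[X])) (by simp [Polynomial.IsRoot]),
    Polynomial.rootMultiplicity_X_sub_C]
  split <;> simp

lemma ordInf_lin (α : ℂ) : ordInf (lin α) = -1 := by
  have hrep : lin α = algebraMap ℂ[X] (RatFunc ℂ) (X - C α) / algebraMap ℂ[X] (RatFunc ℂ) 1 := by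
    simp [lin]
  rw [ordInf_rep (lin_poly_ne_zero α) one_ne_zero hrep]
  simp

lemma evalAt_con (c a : ℂ) : evalAt (con c) a = c := by
  rw [con, evalAt_algebraMap]; simp

lemma evalAt_lin (α a : ℂ) : evalAt (lin α) a = a - α := by
  rw [lin, evalAt_algebraMap]; simp

lemma J_con (c : ℂ) : J (con c) = con c := by
  rw [con, J_algebraMap, Polynomial.eval₂_C, RatFunc.algebraMap_eq_C, RatFunc.algebraMap_C]

lemma J_lin (α : ℂ) : J (lin α) = (RatFunc.X)⁻¹ - RatFunc.C α := by
  rw [lin, J_algebraMap, Polynomial.eval₂_sub, Polynomial.eval₂_X, Polynomial.eval₂_C,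
    RatFunc.algebraMap_eq_C]

lemma tameSymbol_eq_one_of_ords_zero {f g : RatFunc ℂ} {a : ℂ}
    (hm : ordAt f a = 0) (hn : ordAt g a = 0) : tameSymbol f g a = 1 := by
  unfold tameSymbol
  rw [hm, hn, zpow_zero, zpow_zero, div_one, evalAt_one, mul_zero, zpow_zero, one_mul]

lemma tameSymbolInf_eq_one_of_ords_zero {f g : RatFunc ℂ}
    (hm : ordInf f = 0) (hn : ordInf g = 0) : tameSymbolInf f g = 1 := by
  unfold tameSymbolInf
  have h1 : invSubst 1 = 1 := by rw [invSubst_eq_J, map_one]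
  rw [hm, hn, zpow_zero, zpow_zero, div_one, h1, evalAt_one, mul_zero, zpow_zero, one_mul]

lemma WR_con_con {c d : ℂ} (hc : c ≠ 0) (hd : d ≠ 0) : WR (con c) (con d) := by
  have hT : ∀ a : ℂ, tameSymbol (con c) (con d) a = 1 := fun a =>
    tameSymbol_eq_one_of_ords_zero (ordAt_con hc a) (ordAt_con hd a)
  constructor
  · have : {a : ℂ | tameSymbol (con c) (con d) a ≠ 1} = ∅ := by
      ext a; simp [hT a]
    rw [this]; exact Set.finite_empty
  · rw [finprod_eq_one_of_forall_eq_one hT,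
      tameSymbolInf_eq_one_of_ords_zero (ordInf_con hc) (ordInf_con hd), one_mul]

lemma WR_con_lin {c : ℂ} (hc : c ≠ 0) (β : ℂ) : WR (con c) (lin β) := by
  have hT : ∀ a : ℂ, a ≠ β → tameSymbol (con c) (lin β) a = 1 := by
    intro a ha
    exact tameSymbol_eq_one_of_ords_zero (ordAt_con hc a) (by rw [ordAt_lin, if_neg ha])
  have hTβ : tameSymbol (con c) (lin β) β = c := by
    unfold tameSymbol
    rw [ordAt_con hc, ordAt_lin, if_pos rfl, zpow_zero, div_one, zpow_one, evalAt_con,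
      zero_mul, zpow_zero, one_mul]
  constructor
  · apply (Set.finite_singleton β).subset
    intro a ha
    simp only [Set.mem_setOf_eq] at ha
    by_contra hne
    exact ha (hT a hne)
  · rw [finprod_eq_single _ β hT, hTβ]
    have hInf : tameSymbolInf (con c) (lin β) = c⁻¹ := by
      rw [tameSymbolInf_eq_J, ordInf_con hc, ordInf_lin, J_con, J_lin, zpow_zero, div_one,
        zero_mul, zpow_zero, one_mul]
      have : (con c : RatFunc ℂ) ^ (-1 : ℤ) = (con c)⁻¹ := zpow_neg_one _
      rw [this, evalAt_inv_of_ordAt_zero (con_ne_zero hc) (ordAt_con hc 0), evalAt_con]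
    rw [hInf, mul_inv_cancel₀ hc]

lemma WR_lin_lin_same (α : ℂ) : WR (lin α) (lin α) := by
  have hT : ∀ a : ℂ, a ≠ α → tameSymbol (lin α) (lin α) a = 1 := by
    intro a ha
    exact tameSymbol_eq_one_of_ords_zero (by rw [ordAt_lin, if_neg ha])
      (by rw [ordAt_lin, if_neg ha])
  have hTα : tameSymbol (lin α) (lin α) α = -1 := by
    unfold tameSymbol
    rw [ordAt_lin, if_pos rfl, zpow_one, div_self (lin_ne_zero α), evalAt_one, mul_one]
    norm_num
  have hInf : tameSymbolInf (lin α) (lin α) = -1 := by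
    rw [tameSymbolInf_eq_J, ordInf_lin,
      div_self (zpow_ne_zero _ (J_ne_zero (lin_ne_zero α))), evalAt_one, mul_one]
    norm_num
  constructor
  · apply (Set.finite_singleton α).subset
    intro a ha
    simp only [Set.mem_setOf_eq] at ha
    by_contra hne
    exact ha (hT a hne)
  · rw [finprod_eq_single _ α hT, hTα, hInf]
    ring

lemma WR_lin_lin_ne {α β : ℂ} (hab : α ≠ β) : WR (lin α) (lin β) := by
  have hsub : α - β ≠ 0 := sub_ne_zero.mpr hab
  have hT : ∀ a : ℂ, a ≠ α → a ≠ β → tameSymbol (lin α) (lin β) a = 1 := by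
    intro a h1 h2
    exact tameSymbol_eq_one_of_ords_zero (by rw [ordAt_lin, if_neg h1])
      (by rw [ordAt_lin, if_neg h2])
  have hTα : tameSymbol (lin α) (lin β) α = (α - β)⁻¹ := by
    unfold tameSymbol
    rw [ordAt_lin, ordAt_lin, if_pos rfl, if_neg hab, zpow_zero, zpow_one]
    have : (1 : RatFunc ℂ) / lin β = (lin β)⁻¹ := one_div _
    rw [this, evalAt_inv_of_ordAt_zero (lin_ne_zero β) (by rw [ordAt_lin, if_neg hab]),
      evalAt_lin, mul_zero, zpow_zero, one_mul]
  have hTβ : tameSymbol (lin α) (lin β) β = β - α := by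
    unfold tameSymbol
    rw [ordAt_lin, ordAt_lin, if_pos rfl, if_neg (Ne.symm hab), zpow_zero, zpow_one, div_one,
      evalAt_lin, zero_mul, zpow_zero, one_mul]
  have hInf : tameSymbolInf (lin α) (lin β) = -1 := by
    rw [tameSymbolInf_eq_J, ordInf_lin, ordInf_lin, J_lin, J_lin]
    have h1 : ((RatFunc.X)⁻¹ - RatFunc.C α) ^ (-1 : ℤ) / ((RatFunc.X)⁻¹ - RatFunc.C β) ^ (-1 : ℤ)
        = ((RatFunc.X)⁻¹ - RatFunc.C β) / ((RatFunc.X)⁻¹ - RatFunc.C α) := by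
      rw [zpow_neg_one, zpow_neg_one, inv_div_inv]
    have e : ∀ γ : ℂ, (RatFunc.X : RatFunc ℂ)⁻¹ - RatFunc.C γ
        = algebraMap ℂ[X] (RatFunc ℂ) (1 - C γ * X) * (RatFunc.X)⁻¹ := by
      intro γ
      rw [map_sub, map_one, map_mul, RatFunc.algebraMap_C, RatFunc.algebraMap_X, sub_mul,
        one_mul, mul_assoc, mul_inv_cancel₀ RatFunc.X_ne_zero, mul_one]
    have h2 : ((RatFunc.X : RatFunc ℂ)⁻¹ - RatFunc.C β) / ((RatFunc.X)⁻¹ - RatFunc.C α)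
        = algebraMap ℂ[X] (RatFunc ℂ) (1 - C β * X) / algebraMap ℂ[X] (RatFunc ℂ) (1 - C α * X) := by
      rw [e β, e α, mul_div_mul_right _ _ (inv_ne_zero RatFunc.X_ne_zero)]
    have hqa : (1 - C α * X : ℂ[X]).eval 0 ≠ 0 := by simp
    have hq : (1 - C α * X : ℂ[X]) ≠ 0 := fun h0 => hqa (by rw [h0]; simp)
    rw [h1, h2, evalAt_div_algebraMap hq hqa]
    simp
  constructor
  · apply ((Set.finite_singleton α).union (Set.finite_singleton β)).subset
    intro a ha
    simp only [Set.mem_setOf_eq] at ha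
    simp only [Set.mem_union, Set.mem_singleton_iff]
    by_contra hcon
    push_neg at hcon
    exact ha (hT a hcon.1 hcon.2)
  · have hsupp : Function.mulSupport (fun a => tameSymbol (lin α) (lin β) a)
        ⊆ ({α, β} : Finset ℂ) := by
      intro a ha
      simp only [Function.mem_mulSupport] at ha
      simp only [Finset.coe_insert, Finset.coe_singleton, Set.mem_insert_iff,
        Set.mem_singleton_iff]
      by_contra hcon
      push_neg at hcon
      exact ha (hT a hcon.1 hcon.2)
    rw [finprod_eq_prod_of_mulSupport_subset _ hsupp, Finset.prod_pair hab, hTα, hTβ, hInf]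
    field_simp
    ring

def IsGen (g : RatFunc ℂ) : Prop := (∃ c : ℂ, c ≠ 0 ∧ g = con c) ∨ (∃ α : ℂ, g = lin α)

lemma IsGen.ne_zero {g : RatFunc ℂ} (h : IsGen g) : g ≠ 0 := by
  rcases h with ⟨c, hc, rfl⟩ | ⟨α, rfl⟩
  · exact con_ne_zero hc
  · exact lin_ne_zero α

lemma WR_gen_gen {f g : RatFunc ℂ} (hf : IsGen f) (hg : IsGen g) : WR f g := by
  rcases hf with ⟨c, hc, rfl⟩ | ⟨α, rfl⟩
  · rcases hg with ⟨d, hd, rfl⟩ | ⟨β, rfl⟩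
    · exact WR_con_con hc hd
    · exact WR_con_lin hc β
  · rcases hg with ⟨d, hd, rfl⟩ | ⟨β, rfl⟩
    · exact WR_swap (con_ne_zero hd) (lin_ne_zero α) (WR_con_lin hd α)
    · by_cases hab : α = β
      · subst hab; exact WR_lin_lin_same α
      · exact WR_lin_lin_ne hab

lemma WR_poly {g : RatFunc ℂ} (hg : g ≠ 0)
    (hcon : ∀ c : ℂ, c ≠ 0 → WR (con c) g) (hlin : ∀ α : ℂ, WR (lin α) g) :
    ∀ (n : ℕ) (p : ℂ[X]), p ≠ 0 → p.natDegree = n → WR (algebraMap ℂ[X] (RatFunc ℂ) p) g := by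
  intro n
  induction n using Nat.strong_induction_on with
  | _ n ih =>
    intro p hp hdeg
    by_cases h0 : p.natDegree = 0
    · obtain ⟨c, rfl⟩ := Polynomial.natDegree_eq_zero.mp h0
      have hc : c ≠ 0 := fun h => hp (by rw [h, map_zero])
      exact hcon c hc
    · have hdegpos : 0 < p.degree := by
        exact Polynomial.natDegree_pos_iff_degree_pos.mp (by omega)
      obtain ⟨r, hr⟩ := Complex.exists_root hdegpos
      obtain ⟨q, hq⟩ := Polynomial.dvd_iff_isRoot.mpr hr
      have hq0 : q ≠ 0 := by
        intro h
        rw [h, mul_zero] at hq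
        exact hp hq
      have hdq : q.natDegree < n := by
        have := Polynomial.natDegree_mul (lin_poly_ne_zero r) hq0
        rw [← hq] at this
        rw [Polynomial.natDegree_X_sub_C] at this
        omega
      have hsplit : algebraMap ℂ[X] (RatFunc ℂ) p = lin r * algebraMap ℂ[X] (RatFunc ℂ) q := by
        rw [hq, map_mul, lin]
      rw [hsplit]
      exact WR_mul_left (lin_ne_zero r) (RatFunc.algebraMap_ne_zero hq0) hg
        (hlin r) (ih q.natDegree hdq q hq0 rfl)

lemma WR_rat {g : RatFunc ℂ} (hg : g ≠ 0)
    (hcon : ∀ c : ℂ, c ≠ 0 → WR (con c) g) (hlin : ∀ α : ℂ, WR (lin α) g) :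
    ∀ f : RatFunc ℂ, f ≠ 0 → WR f g := by
  intro f hf
  have hrep : f = algebraMap ℂ[X] (RatFunc ℂ) f.num * (algebraMap ℂ[X] (RatFunc ℂ) f.denom)⁻¹ := by
    rw [← div_eq_mul_inv, RatFunc.num_div_denom]
  rw [hrep]
  have hnum := RatFunc.algebraMap_ne_zero (RatFunc.num_ne_zero hf)
  have hden := RatFunc.algebraMap_ne_zero (RatFunc.denom_ne_zero f)
  exact WR_mul_left hnum (inv_ne_zero hden) hg
    (WR_poly hg hcon hlin _ _ (RatFunc.num_ne_zero hf) rfl)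
    (WR_inv_left hden hg (WR_poly hg hcon hlin _ _ (RatFunc.denom_ne_zero f) rfl))

lemma WR_rat_gen {f g : RatFunc ℂ} (hf : f ≠ 0) (hg : IsGen g) : WR f g :=
  WR_rat hg.ne_zero
    (fun c hc => WR_gen_gen (Or.inl ⟨c, hc, rfl⟩) hg)
    (fun α => WR_gen_gen (Or.inr ⟨α, rfl⟩) hg) f hf

lemma WR_all {f g : RatFunc ℂ} (hf : f ≠ 0) (hg : g ≠ 0) : WR f g := by
  have hgf : WR g f := by
    apply WR_rat hf
    · intro c hc
      exact WR_swap hf (con_ne_zero hc) (WR_rat_gen hf (Or.inl ⟨c, hc, rfl⟩))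
    · intro α
      exact WR_swap hf (lin_ne_zero α) (WR_rat_gen hf (Or.inr ⟨α, rfl⟩))
    · exact hg
  exact WR_swap hg hf hgf

/-- **Weil reciprocity on ℙ¹(ℂ).** For nonzero rational functions `f, g ∈ ℂ(z)`, only
finitely many of the tame symbols `T_a{f,g}` (for `a ∈ ℂ`) differ from `1`, and the
product of the tame symbols over all points of `ℙ¹(ℂ)` — all `a ∈ ℂ` together with the
point at infinity — equals `1`. -/
theorem weil_reciprocity_P1 (f g : RatFunc ℂ) (hf : f ≠ 0) (hg : g ≠ 0) :
    {a : ℂ | tameSymbol f g a ≠ 1}.Finite ∧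
    (∏ᶠ a : ℂ, tameSymbol f g a) * tameSymbolInf f g = 1 :=
  WR_all hf hg
end

section
/- Let f and g be nonzero rational functions in ℂ(z) such that ord_∞(f) = ord_∞(g) = 0 and such that no point a ∈ ℂ is simultaneously a zero or pole of f and a zero or pole of g (disjoint divisor supports). Then ∏_{a ∈ ℂ, ord_a(g) ≠ 0} f(a)^{ord_a(g)} = ∏_{b ∈ ℂ, ord_b(f) ≠ 0} g(b)^{ord_b(f)}, where both products are finite and all evaluations f(a), g(b) are well-defined nonzero complex numbers. -/
open Polynomial

private lemma zpow_sum' {α : Type*} (x : ℂ) (hx : x ≠ 0) (s : Finset α) (n : α → ℤ) :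
    x ^ (∑ a ∈ s, n a) = ∏ a ∈ s, x ^ n a := by
  classical
  induction s using Finset.induction_on with
  | empty => simp
  | insert _ _ h ih => rw [Finset.sum_insert h, Finset.prod_insert h, zpow_add₀ hx, ih]

private lemma eval_formula (p : Polynomial ℂ) (x : ℂ) :
    p.eval x = p.leadingCoeff * ∏ b ∈ p.roots.toFinset, (x - b) ^ p.rootMultiplicity b := by
  classical
  have hcard : p.roots.card = p.natDegree :=
    (Polynomial.splits_iff_card_roots).mp (IsAlgClosed.splits p)
  conv_lhs => rw [← Polynomial.C_leadingCoeff_mul_prod_multiset_X_sub_C hcard]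
  rw [Polynomial.eval_mul, Polynomial.eval_C, Polynomial.eval_multiset_prod, Multiset.map_map]
  congr 1
  have : (Polynomial.eval x ∘ fun a => X - C a) = fun a => x - a := by
    funext a; simp
  rw [this, Finset.prod_multiset_map_count]
  exact Finset.prod_congr rfl fun b _ => by rw [Polynomial.count_roots]

private lemma sum_rootMult (p : Polynomial ℂ) (hp : p ≠ 0) (s : Finset ℂ)
    (hs : p.roots.toFinset ⊆ s) :
    ∑ b ∈ s, p.rootMultiplicity b = p.natDegree := by
  classical
  have hcard : p.roots.card = p.natDegree :=
    (Polynomial.splits_iff_card_roots).mp (IsAlgClosed.splits p)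
  rw [← hcard, ← Multiset.toFinset_sum_count_eq p.roots]
  rw [← Finset.sum_subset hs (fun b _ hb => Polynomial.rootMultiplicity_eq_zero
    (fun hroot => hb (Multiset.mem_toFinset.mpr ((Polynomial.mem_roots hp).mpr hroot))))]
  exact Finset.sum_congr rfl fun b _ => (Polynomial.count_roots p).symm

/-- The support of a rational function: union of roots of numerator and denominator. -/
noncomputable def suppRF (f : RatFunc ℂ) : Finset ℂ :=
  f.num.roots.toFinset ∪ f.denom.roots.toFinset

lemma ordAt_ne_zero_mem_supp (f : RatFunc ℂ) (a : ℂ) (h : ordAt f a ≠ 0) : a ∈ suppRF f := by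
  classical
  by_contra hmem
  simp only [suppRF, Finset.mem_union, Multiset.mem_toFinset, Polynomial.mem_roots',
    not_or] at hmem
  apply h
  have h1 : rootMultiplicity a f.num = 0 := by
    by_contra h1
    exact hmem.1 (Polynomial.rootMultiplicity_pos'.mp (Nat.pos_of_ne_zero h1))
  have h2 : rootMultiplicity a f.denom = 0 := by
    by_contra h2
    exact hmem.2 (Polynomial.rootMultiplicity_pos'.mp (Nat.pos_of_ne_zero h2))
  simp [ordAt, h1, h2]

lemma mem_supp_eval_zero (f : RatFunc ℂ) (a : ℂ) (h : a ∈ suppRF f) :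
    f.num.eval a = 0 ∨ f.denom.eval a = 0 := by
  classical
  simp only [suppRF, Finset.mem_union, Multiset.mem_toFinset, Polynomial.mem_roots'] at h
  rcases h with h | h
  · exact Or.inl h.2
  · exact Or.inr h.2

/-- One side of the Weil reciprocity computation. -/
lemma weil_side (f : RatFunc ℂ) (hf : f ≠ 0) (hinf_f : ordInf f = 0)
    (Sg : Finset ℂ) (n : ℂ → ℤ) (hn : ∑ a ∈ Sg, n a = 0)
    (hne : ∀ a ∈ Sg, ∀ b ∈ suppRF f, a ≠ b) :
    ∏ a ∈ Sg, evalAt f a ^ n a =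
      ∏ a ∈ Sg, ∏ b ∈ suppRF f, (a - b) ^ (ordAt f b * n a) := by
  classical
  set cf : ℂ := f.num.leadingCoeff / f.denom.leadingCoeff with hcf
  have hnum : f.num ≠ 0 := RatFunc.num_ne_zero hf
  have hden : f.denom ≠ 0 := RatFunc.denom_ne_zero f
  have hcf0 : cf ≠ 0 := div_ne_zero (Polynomial.leadingCoeff_ne_zero.mpr hnum)
    (Polynomial.leadingCoeff_ne_zero.mpr hden)
  -- step 1: evaluation formula
  have heval : ∀ a ∈ Sg, evalAt f a = cf * ∏ b ∈ suppRF f, (a - b) ^ ordAt f b := by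
    intro a ha
    have hsub : ∀ b ∈ suppRF f, a - b ≠ 0 := fun b hb => sub_ne_zero.mpr (hne a ha b hb)
    have hev : evalAt f a = f.num.eval a / f.denom.eval a := by
      simp [evalAt, RatFunc.eval]
    have hextend : ∀ p : Polynomial ℂ, p ≠ 0 → p.roots.toFinset ⊆ suppRF f →
        p.eval a = p.leadingCoeff * ∏ b ∈ suppRF f, (a - b) ^ ((p.rootMultiplicity b : ℤ)) := by
      intro p hp0 hp
      rw [eval_formula p a]
      congr 1
      have hzn : ∀ b, (a - b) ^ ((p.rootMultiplicity b : ℤ)) = (a - b) ^ p.rootMultiplicity b :=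
        fun b => zpow_natCast _ _
      simp_rw [hzn]
      exact Finset.prod_subset hp (fun b _ hb => by
        rw [Polynomial.rootMultiplicity_eq_zero (fun hroot => hb
          (Multiset.mem_toFinset.mpr ((Polynomial.mem_roots hp0).mpr hroot))), pow_zero])
    rw [hev, hextend f.num hnum (Finset.subset_union_left),
      hextend f.denom hden (Finset.subset_union_right), mul_div_mul_comm,
      ← Finset.prod_div_distrib]
    congr 1
    exact Finset.prod_congr rfl fun b hb => (zpow_sub₀ (hsub b hb) _ _).symm
  calc ∏ a ∈ Sg, evalAt f a ^ n a
      = ∏ a ∈ Sg, (cf ^ n a * (∏ b ∈ suppRF f, (a - b) ^ ordAt f b) ^ n a) := by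
        refine Finset.prod_congr rfl fun a ha => ?_
        rw [heval a ha, mul_zpow]
    _ = (∏ a ∈ Sg, cf ^ n a) * ∏ a ∈ Sg, (∏ b ∈ suppRF f, (a - b) ^ ordAt f b) ^ n a := by
        rw [Finset.prod_mul_distrib]
    _ = ∏ a ∈ Sg, ∏ b ∈ suppRF f, (a - b) ^ (ordAt f b * n a) := by
        rw [← zpow_sum' cf hcf0, hn, zpow_zero, one_mul]
        refine Finset.prod_congr rfl fun a _ => ?_
        rw [← Finset.prod_zpow]
        exact Finset.prod_congr rfl fun b _ => (zpow_mul _ _ _).symm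

lemma mem_supp_ordAt_ne_zero (f : RatFunc ℂ) (a : ℂ) (h : a ∈ suppRF f) : ordAt f a ≠ 0 := by
  classical
  have hcop := RatFunc.isCoprime_num_denom f
  obtain ⟨u, v, huv⟩ := hcop
  have hnb : ¬(f.num.eval a = 0 ∧ f.denom.eval a = 0) := by
    rintro ⟨h1, h2⟩
    have := congrArg (Polynomial.eval a) huv
    simp [h1, h2] at this
  simp only [suppRF, Finset.mem_union, Multiset.mem_toFinset, Polynomial.mem_roots'] at h
  rcases h with ⟨hp0, hroot⟩ | ⟨hp0, hroot⟩
  · have hpos : 0 < rootMultiplicity a f.num := (Polynomial.rootMultiplicity_pos hp0).mpr hroot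
    have hz : rootMultiplicity a f.denom = 0 :=
      Polynomial.rootMultiplicity_eq_zero (fun hr => hnb ⟨hroot, hr⟩)
    simp only [ordAt, hz, Nat.cast_zero, sub_zero]
    exact_mod_cast Nat.pos_iff_ne_zero.mp hpos
  · have hpos : 0 < rootMultiplicity a f.denom := (Polynomial.rootMultiplicity_pos hp0).mpr hroot
    have hz : rootMultiplicity a f.num = 0 :=
      Polynomial.rootMultiplicity_eq_zero (fun hr => hnb ⟨hr, hroot⟩)
    simp only [ordAt, hz, Nat.cast_zero, zero_sub, neg_ne_zero]
    exact_mod_cast Nat.pos_iff_ne_zero.mp hpos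

lemma sum_ordAt (f : RatFunc ℂ) (hf : f ≠ 0) (hinf : ordInf f = 0) :
    ∑ a ∈ suppRF f, ordAt f a = 0 := by
  classical
  have h1 : ∑ a ∈ suppRF f, f.num.rootMultiplicity a = f.num.natDegree :=
    sum_rootMult f.num (RatFunc.num_ne_zero hf) _ Finset.subset_union_left
  have h2 : ∑ a ∈ suppRF f, f.denom.rootMultiplicity a = f.denom.natDegree :=
    sum_rootMult f.denom (RatFunc.denom_ne_zero f) _ Finset.subset_union_right
  have e1 : ∑ a ∈ suppRF f, (f.num.rootMultiplicity a : ℤ) = (f.num.natDegree : ℤ) := by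
    exact_mod_cast h1
  have e2 : ∑ a ∈ suppRF f, (f.denom.rootMultiplicity a : ℤ) = (f.denom.natDegree : ℤ) := by
    exact_mod_cast h2
  simp only [ordAt]
  rw [Finset.sum_sub_distrib, e1, e2]
  simp only [ordInf] at hinf
  omega

/-- **Weil reciprocity on ℙ¹ with disjoint divisor supports.** If `f, g ∈ ℂ(z)` are
nonzero with `ord_∞(f) = ord_∞(g) = 0` and no `a ∈ ℂ` is simultaneously a zero or pole
of `f` and a zero or pole of `g`, then
`∏_{a, ord_a(g) ≠ 0} f(a)^{ord_a(g)} = ∏_{b, ord_b(f) ≠ 0} g(b)^{ord_b(f)}`;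
both products are finite and all the evaluations are well-defined nonzero complex
numbers. -/
theorem weil_reciprocity_disjoint (f g : RatFunc ℂ) (hf : f ≠ 0) (hg : g ≠ 0)
    (hinf_f : ordInf f = 0) (hinf_g : ordInf g = 0)
    (hdisj : ∀ a : ℂ, ¬((f.num.eval a = 0 ∨ f.denom.eval a = 0) ∧
      (g.num.eval a = 0 ∨ g.denom.eval a = 0))) :
    {a : ℂ | ordAt g a ≠ 0}.Finite ∧ {b : ℂ | ordAt f b ≠ 0}.Finite ∧
    (∀ a : ℂ, ordAt g a ≠ 0 → f.num.eval a ≠ 0 ∧ f.denom.eval a ≠ 0) ∧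
    (∀ b : ℂ, ordAt f b ≠ 0 → g.num.eval b ≠ 0 ∧ g.denom.eval b ≠ 0) ∧
    (∏ᶠ (a : ℂ) (_ : ordAt g a ≠ 0), evalAt f a ^ ordAt g a) =
      ∏ᶠ (b : ℂ) (_ : ordAt f b ≠ 0), evalAt g b ^ ordAt f b := by
  classical
  refine ⟨Set.Finite.subset (suppRF g).finite_toSet
      (fun a ha => ordAt_ne_zero_mem_supp g a ha),
    Set.Finite.subset (suppRF f).finite_toSet
      (fun b hb => ordAt_ne_zero_mem_supp f b hb), ?_, ?_, ?_⟩
  · intro a ha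
    have hg' := mem_supp_eval_zero g a (ordAt_ne_zero_mem_supp g a ha)
    have hA : ¬(f.num.eval a = 0 ∨ f.denom.eval a = 0) := fun hA => hdisj a ⟨hA, hg'⟩
    exact ⟨fun h => hA (Or.inl h), fun h => hA (Or.inr h)⟩
  · intro b hb
    have hf' := mem_supp_eval_zero f b (ordAt_ne_zero_mem_supp f b hb)
    have hB : ¬(g.num.eval b = 0 ∨ g.denom.eval b = 0) := fun hB => hdisj b ⟨hf', hB⟩
    exact ⟨fun h => hB (Or.inl h), fun h => hB (Or.inr h)⟩
  · -- the product identity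
    have hiffg : ∀ x : ℂ, ordAt g x ≠ 0 ↔ x ∈ suppRF g :=
      fun x => ⟨ordAt_ne_zero_mem_supp g x, mem_supp_ordAt_ne_zero g x⟩
    have hifff : ∀ x : ℂ, ordAt f x ≠ 0 ↔ x ∈ suppRF f :=
      fun x => ⟨ordAt_ne_zero_mem_supp f x, mem_supp_ordAt_ne_zero f x⟩
    rw [finprod_cond_eq_prod_of_cond_iff _ (fun {x} _ => hiffg x),
      finprod_cond_eq_prod_of_cond_iff _ (fun {x} _ => hifff x)]
    have hne : ∀ a ∈ suppRF g, ∀ b ∈ suppRF f, a ≠ b := by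
      rintro a ha b hb rfl
      exact hdisj a ⟨mem_supp_eval_zero f a hb, mem_supp_eval_zero g a ha⟩
    have hsumg : ∑ a ∈ suppRF g, ordAt g a = 0 := sum_ordAt g hg hinf_g
    have hsumf : ∑ b ∈ suppRF f, ordAt f b = 0 := sum_ordAt f hf hinf_f
    rw [weil_side f hf hinf_f (suppRF g) (ordAt g) hsumg hne,
      weil_side g hg hinf_g (suppRF f) (ordAt f) hsumf
        (fun b hb a ha => (hne a ha b hb).symm)]
    rw [Finset.prod_comm]
    refine Finset.prod_congr rfl fun b hb => ?_
    have hsign : ∏ a ∈ suppRF g, ((-1 : ℂ)) ^ (ordAt f b * ordAt g a) = 1 := by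
      rw [← zpow_sum' (-1 : ℂ) (by norm_num), ← Finset.mul_sum, hsumg, mul_zero, zpow_zero]
    calc ∏ a ∈ suppRF g, (a - b) ^ (ordAt f b * ordAt g a)
        = ∏ a ∈ suppRF g, ((-1 : ℂ) ^ (ordAt f b * ordAt g a) *
            (b - a) ^ (ordAt f b * ordAt g a)) := by
          refine Finset.prod_congr rfl fun a _ => ?_
          rw [← mul_zpow]
          congr 1
          ring
      _ = ∏ a ∈ suppRF g, (b - a) ^ (ordAt g a * ordAt f b) := by
          rw [Finset.prod_mul_distrib, hsign, one_mul]
          exact Finset.prod_congr rfl fun a _ => by rw [mul_comm (ordAt f b)]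
end

section
/- Let N ≥ 1 and let p₁, …, p_N, q₁, …, q_N be complex numbers such that the sets {p₁, …, p_N} and {q₁, …, q_N} are disjoint. Then there exists a ∈ ℂ, distinct from all the p_i and all the q_i, such that ∑_{i=1}^N log|p_i − a| ≠ ∑_{i=1}^N log|q_i − a|. -/
/-- Given `N ≥ 1` and complex numbers `p₁, …, p_N, q₁, …, q_N` with
`{p₁, …, p_N} ∩ {q₁, …, q_N} = ∅`, there exists `a ∈ ℂ`, distinct from all the `pᵢ` and
all the `qᵢ`, such that `∑ᵢ log|pᵢ − a| ≠ ∑ᵢ log|qᵢ − a|`. -/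
theorem exists_point_separating_log_sums (N : ℕ) (hN : 1 ≤ N) (p q : Fin N → ℂ)
    (hdisj : Disjoint (Set.range p) (Set.range q)) :
    ∃ a : ℂ, (∀ i, p i ≠ a) ∧ (∀ i, q i ≠ a) ∧
      (∑ i, Real.log ‖p i - a‖) ≠
        ∑ i, Real.log ‖q i - a‖ := by
  by_contra h
  push_neg at h
  set S : Set ℂ := Set.range p ∪ Set.range q with hS
  have hSc : S.Countable := ((Set.finite_range p).union (Set.finite_range q)).countable
  have hdense : Dense Sᶜ := hSc.dense_compl ℂ
  have key : Set.EqOn (fun a => ‖∏ i, (p i - a)‖)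
      (fun a => ‖∏ i, (q i - a)‖) Sᶜ := by
    intro a ha
    have hp : ∀ i, p i ≠ a := by
      intro i hi; exact ha (Or.inl ⟨i, hi⟩)
    have hq : ∀ i, q i ≠ a := by
      intro i hi; exact ha (Or.inr ⟨i, hi⟩)
    have heq := h a hp hq
    have e1 : ‖∏ i, (p i - a)‖ =
        Real.exp (∑ i, Real.log ‖p i - a‖) := by
      rw [Real.exp_sum, norm_prod]
      refine Finset.prod_congr rfl fun i _ => ?_
      rw [Real.exp_log (by simpa [sub_eq_zero] using hp i)]
    have e2 : ‖∏ i, (q i - a)‖ =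
        Real.exp (∑ i, Real.log ‖q i - a‖) := by
      rw [Real.exp_sum, norm_prod]
      refine Finset.prod_congr rfl fun i _ => ?_
      rw [Real.exp_log (by simpa [sub_eq_zero] using hq i)]
    simp only [e1, e2, heq]
  have hcp : Continuous fun a : ℂ => ‖∏ i, (p i - a)‖ :=
    continuous_norm.comp (continuous_finset_prod _ fun i _ =>
      (continuous_const.sub continuous_id))
  have hcq : Continuous fun a : ℂ => ‖∏ i, (q i - a)‖ :=
    continuous_norm.comp (continuous_finset_prod _ fun i _ =>
      (continuous_const.sub continuous_id))
  have hext : ∀ a : ℂ, ‖∏ i, (p i - a)‖ = ‖∏ i, (q i - a)‖ :=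
    fun a => congrFun (Continuous.ext_on hdense hcp hcq key) a
  -- evaluate at a = q ⟨0, _⟩
  have i0 : Fin N := ⟨0, hN⟩
  have hq0 : (∏ i, (q i - q i0)) = 0 :=
    Finset.prod_eq_zero (Finset.mem_univ i0) (by ring)
  have hp0 : ‖∏ i, (p i - q i0)‖ = 0 := by
    rw [hext (q i0), hq0, norm_zero]
  rw [norm_eq_zero] at hp0
  obtain ⟨i, _, hi⟩ := Finset.prod_eq_zero_iff.mp hp0
  have : p i = q i0 := by linear_combination hi
  exact Set.disjoint_left.mp hdisj ⟨i, rfl⟩ ⟨i0, this.symm⟩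
end
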